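/- arXiv:0907.3401 — 4 statements merged into one kernel-verified Lean document; each statement's English description precedes it below -/
import Mathlib

section
/- For any positive integer n, the least common multiple of the numbers 1·C(n,1), 2·C(n,2), ..., n·C(n,n) equals the least common multiple of 1, 2, ..., n; that is, lcm{k·C(n,k) : 1 ≤ k ≤ n} = lcm(1, 2, ..., n). -/
open Nat Finset

lemma key_val {p n k : ℕ} (hp : p.Prime) (hk : 1 ≤ k) (hkn : k ≤ n) :
    (k * n.choose k).factorization p ≤ Nat.log p n := by
  have hk0 : k ≠ 0 := by omega
  have hc0 : n.choose k ≠ 0 := (Nat.choose_pos hkn).ne'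
  have hn0 : n ≠ 0 := by omega
  rw [Nat.factorization_mul hk0 hc0]
  simp only [Finsupp.coe_add, Pi.add_apply]
  set a := k.factorization p with ha
  have hpa : p ^ a ∣ k := Nat.ordProj_dvd k p
  have haln : a ≤ Nat.log p n := by
    rw [Nat.le_log_iff_pow_le hp.one_lt hn0]
    exact le_trans (Nat.le_of_dvd (by omega) hpa) hkn
  have : Fact p.Prime := ⟨hp⟩
  have hv : (n.choose k).factorization p = padicValNat p (n.choose k) := by
    rw [Nat.factorization_def _ hp]
  rw [hv, padicValNat_choose hkn (show Nat.log p n < Nat.log p n + 1 by omega)]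
  have hsub : {i ∈ Finset.Ico 1 (Nat.log p n + 1) | p ^ i ≤ k % p ^ i + (n - k) % p ^ i}
      ⊆ Finset.Ico (a + 1) (Nat.log p n + 1) := by
    intro i hi
    simp only [Finset.mem_filter, Finset.mem_Ico] at hi ⊢
    refine ⟨?_, hi.1.2⟩
    by_contra h
    have hia : i ≤ a := by omega
    have : p ^ i ∣ k := dvd_trans (pow_dvd_pow p hia) hpa
    have hk_mod : k % p ^ i = 0 := Nat.eq_zero_of_dvd_of_lt ((Nat.dvd_mod_iff (dvd_refl (p ^ i))).mpr this) (Nat.mod_lt _ (Nat.pow_pos (n := i) hp.pos))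
    have hlt : (n - k) % p ^ i < p ^ i := Nat.mod_lt _ (Nat.pow_pos (n := i) hp.pos)
    omega

  have hcard : #{i ∈ Finset.Ico 1 (Nat.log p n + 1) | p ^ i ≤ k % p ^ i + (n - k) % p ^ i}
      ≤ Nat.log p n - a := by
    calc _ ≤ #(Finset.Ico (a + 1) (Nat.log p n + 1)) := Finset.card_le_card hsub
    _ = Nat.log p n - a := by rw [Nat.card_Ico]; omega
  omega

theorem nair_identity (n : ℕ) (hn : 0 < n) :
    (Finset.Icc 1 n).lcm (fun k => k * n.choose k) = (Finset.Icc 1 n).lcm id := by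
  have hn0 : n ≠ 0 := hn.ne'
  set L := (Finset.Icc 1 n).lcm id with hL
  have hLne : L ≠ 0 := by
    rw [hL, Ne, Finset.lcm_eq_zero_iff]
    rintro ⟨m, hm, hm0⟩
    simp only [Finset.mem_Icc] at hm
    exact absurd hm0 (by simp only [id_eq]; omega)
  apply Nat.dvd_antisymm
  · apply Finset.lcm_dvd
    intro k hk
    simp only [Finset.mem_Icc] at hk
    have hd0 : k * n.choose k ≠ 0 :=
      Nat.mul_ne_zero (by omega) (Nat.choose_pos hk.2).ne'
    rw [← Nat.factorization_le_iff_dvd hd0 hLne]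
    intro p
    by_cases hp : p.Prime
    · refine le_trans (key_val hp hk.1 hk.2) ?_
      rw [← Nat.Prime.pow_dvd_iff_le_factorization hp hLne]
      refine Finset.dvd_lcm ?_
      simp only [Finset.mem_Icc]
      exact ⟨Nat.one_le_iff_ne_zero.mpr (pow_ne_zero _ hp.pos.ne'),
        Nat.pow_log_le_self p hn0⟩
    · simp [Nat.factorization_eq_zero_of_not_prime _ hp]
  · apply Finset.lcm_dvd
    intro m hm
    simp only [Finset.mem_Icc] at hm
    exact dvd_trans (dvd_mul_right m (n.choose m))
      (Finset.dvd_lcm (Finset.mem_Icc.mpr hm))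
end

section
/- For any nonnegative integer n, the least common multiple of the binomial coefficients C(n,0), C(n,1), ..., C(n,n) equals lcm(1, 2, ..., n+1) divided by n+1; that is, lcm{C(n,k) : 0 ≤ k ≤ n} = lcm(1, 2, ..., n+1)/(n+1). Equivalently, (n+1)·lcm{C(n,k) : 0 ≤ k ≤ n} = lcm(1, 2, ..., n+1). -/
open Nat Finset

/-- Kummer-type bound: the `p`-adic valuation of `k * choose n k` is at most `log p n`. -/
lemma kummer_bound {p n k : ℕ} (hp : p.Prime) (hk : 1 ≤ k) (hkn : k ≤ n) :
    k.factorization p + (n.choose k).factorization p ≤ Nat.log p n := by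
  set j := k.factorization p with hj
  have hj_le : j ≤ Nat.log p n :=
    (Nat.le_log_iff_pow_le hp.one_lt (by omega)).mpr
      (le_trans (Nat.le_of_dvd hk (Nat.ordProj_dvd k p)) hkn)
  have hcard : (n.choose k).factorization p ≤ Nat.log p n - j := by
    rw [Nat.factorization_def _ hp, @padicValNat_def _ ⟨hp⟩ _ (Nat.choose_pos hkn).ne']
    rw [← Nat.cast_le (α := ℕ∞), ← FiniteMultiplicity.emultiplicity_eq_multiplicity
      (Nat.finiteMultiplicity_iff.2 ⟨hp.ne_one, Nat.choose_pos hkn⟩)]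
    simp only [hp.emultiplicity_choose hkn (lt_add_one _), Nat.cast_le]
    calc #{i ∈ Ico 1 (Nat.log p n + 1) | p ^ i ≤ k % p ^ i + (n - k) % p ^ i}
        ≤ #(Ico (j + 1) (Nat.log p n + 1)) := by
          apply Finset.card_le_card
          intro i hi
          simp only [Finset.mem_filter, Finset.mem_Ico] at hi ⊢
          obtain ⟨⟨h1, h2⟩, h3⟩ := hi
          refine ⟨?_, h2⟩
          by_contra hij
          push_neg at hij
          have hdvd : p ^ i ∣ k := dvd_trans (pow_dvd_pow p (by omega)) (Nat.ordProj_dvd k p)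
          have hmod : k % p ^ i = 0 := Nat.mod_eq_zero_of_dvd hdvd
          have hlt : (n - k) % p ^ i < p ^ i := Nat.mod_lt _ (pow_pos hp.pos i)
          omega
      _ = Nat.log p n - j := by rw [Nat.card_Ico]; omega
  omega

/-- Nair's lemma: `k * choose m k` divides `lcm(1, ..., m)`. -/
lemma nair {m k : ℕ} (hk : 1 ≤ k) (hkm : k ≤ m) :
    k * m.choose k ∣ (Finset.Icc 1 m).lcm id := by
  have hm : 1 ≤ m := le_trans hk hkm
  have hL0 : (Finset.Icc 1 m).lcm id ≠ 0 := by
    rw [Ne, Finset.lcm_eq_zero_iff]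
    simp only [Set.mem_image, Finset.mem_coe, Finset.mem_Icc, id_eq]
    rintro ⟨x, ⟨hx1, _⟩, hx0⟩
    omega
  have hc0 : k * m.choose k ≠ 0 :=
    Nat.mul_ne_zero (by omega) (Nat.choose_pos hkm).ne'
  rw [← Nat.factorization_le_iff_dvd hc0 hL0]
  refine Finsupp.le_def.mpr fun p => ?_
  by_cases hp : p.Prime
  · have hfac : (k * m.choose k).factorization p
        = k.factorization p + (m.choose k).factorization p := by
      rw [Nat.factorization_mul (by omega) (Nat.choose_pos hkm).ne']
      simp
    have halog : (k * m.choose k).factorization p ≤ Nat.log p m := by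
      rw [hfac]; exact kummer_bound hp hk hkm
    set a := (k * m.choose k).factorization p with ha
    have h2 : p ^ a ∣ (Finset.Icc 1 m).lcm id := by
      have hmem : p ^ a ∈ Finset.Icc 1 m := by
        rw [Finset.mem_Icc]
        constructor
        · exact Nat.one_le_iff_ne_zero.mpr (pow_ne_zero _ hp.pos.ne')
        · calc p ^ a ≤ p ^ Nat.log p m := Nat.pow_le_pow_right hp.pos halog
            _ ≤ m := Nat.pow_log_le_self p (by omega)
      exact Finset.dvd_lcm hmem
    exact (Nat.Prime.pow_dvd_iff_le_factorization hp hL0).1 (by exact h2)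
  · simp [Nat.factorization_eq_zero_of_not_prime _ hp]

lemma lcm_mul_left_finset {s : Finset ℕ} (hs : s.Nonempty) (c : ℕ) (f : ℕ → ℕ) :
    s.lcm (fun i => c * f i) = c * s.lcm f := by
  induction hs using Finset.Nonempty.cons_induction with
  | singleton a => simp [Finset.lcm_singleton, Nat.lcm]
  | cons a s ha hs ih =>
      simp only [Finset.cons_eq_insert, Finset.lcm_insert, ih]
      simp [_root_.lcm_mul_left]

theorem farhi_identity (n : ℕ) :
    (Finset.range (n + 1)).lcm n.choose = (Finset.Icc 1 (n + 1)).lcm id / (n + 1) := by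
  have key : (Finset.Icc 1 (n + 1)).lcm id
      = (n + 1) * (Finset.range (n + 1)).lcm n.choose := by
    apply Nat.dvd_antisymm
    · apply Finset.lcm_dvd
      intro m hm
      rw [Finset.mem_Icc] at hm
      have hmc : (n + 1) * n.choose (m - 1) = (n + 1).choose m * m := by
        have h := Nat.add_one_mul_choose_eq n (m - 1)
        rwa [show m - 1 + 1 = m by omega] at h
      have h1 : (m : ℕ) ∣ (n + 1) * n.choose (m - 1) := by
        rw [hmc]; exact dvd_mul_left m _
      exact h1.trans (mul_dvd_mul_left _
        (Finset.dvd_lcm (Finset.mem_range.2 (by omega))))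
    · rw [← lcm_mul_left_finset ⟨0, Finset.mem_range.2 (Nat.succ_pos n)⟩ (n + 1) n.choose]
      apply Finset.lcm_dvd
      intro k hk
      rw [Nat.add_one_mul_choose_eq, mul_comm]
      exact nair (Nat.succ_pos k) (Nat.succ_le_succ (Nat.lt_succ_iff.1 (Finset.mem_range.1 hk)))
  rw [key, Nat.mul_div_cancel_left _ (Nat.succ_pos n)]
end

section
/- For any positive integer n, n times the least common multiple of the binomial coefficients C(n-1,0), C(n-1,1), ..., C(n-1,n-1) equals the least common multiple of 1, 2, ..., n; that is, n·lcm{C(n-1,k) : 0 ≤ k ≤ n-1} = lcm(1, 2, ..., n). -/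
open Nat Finset

-- Key lemma: for prime p and 1 ≤ m ≤ n, v_p(m * C(n,m)) ≤ log p n
lemma key {p m n : ℕ} (hp : p.Prime) (hm : 1 ≤ m) (hmn : m ≤ n) :
    m.factorization p + (n.choose m).factorization p ≤ Nat.log p n := by
  set e := m.factorization p with he
  have hn0 : 0 < n := lt_of_lt_of_le hm hmn
  have hch : 0 < n.choose m := Nat.choose_pos hmn
  have hloge : e ≤ Nat.log p n := by
    have h1 : p ^ e ∣ m := Nat.ordProj_dvd m p
    have h2 : p ^ e ≤ n := le_trans (Nat.le_of_dvd hm h1) hmn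
    exact (Nat.le_log_iff_pow_le hp.one_lt hn0.ne').mpr h2
  have hv : (n.choose m).factorization p ≤ Nat.log p n - e := by
    rw [Nat.factorization_def _ hp, @padicValNat_def _ ⟨hp⟩ _ hch.ne']
    have hfin : FiniteMultiplicity p (n.choose m) :=
      Nat.finiteMultiplicity_iff.2 ⟨hp.ne_one, hch⟩
    rw [← Nat.cast_le (α := ℕ∞), ← hfin.emultiplicity_eq_multiplicity,
      hp.emultiplicity_choose hmn (lt_add_one _), Nat.cast_le]
    have hsub : {i ∈ Ico 1 (Nat.log p n + 1) | p ^ i ≤ m % p ^ i + (n - m) % p ^ i}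
        ⊆ Ico (e + 1) (Nat.log p n + 1) := by
      intro i hi
      simp only [mem_filter, mem_Ico] at hi ⊢
      obtain ⟨⟨h1, h2⟩, h3⟩ := hi
      refine ⟨?_, h2⟩
      by_contra hie
      push_neg at hie
      have : p ^ i ∣ m := dvd_trans (pow_dvd_pow p (Nat.lt_succ_iff.mp hie)) (Nat.ordProj_dvd m p)
      have hm0 : m % p ^ i = 0 := Nat.mod_eq_zero_of_dvd this
      have hlt : (n - m) % p ^ i < p ^ i := Nat.mod_lt _ (pow_pos hp.pos i)
      omega
    calc _ ≤ (Ico (e + 1) (Nat.log p n + 1)).card := Finset.card_le_card hsub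
      _ = Nat.log p n - e := by rw [Nat.card_Ico]; omega
  omega

lemma lcm_factorization_le {s : Finset ℕ} {f : ℕ → ℕ} {p b : ℕ}
    (hf : ∀ i ∈ s, f i ≠ 0) (h : ∀ i ∈ s, (f i).factorization p ≤ b) :
    (s.lcm f).factorization p ≤ b := by
  induction s using Finset.cons_induction with
  | empty => simp
  | cons a s ha ih =>
    rw [Finset.cons_eq_insert, Finset.lcm_insert]
    have hfa : f a ≠ 0 := hf a (Finset.mem_cons_self a s)
    have hs0 : s.lcm f ≠ 0 := by
      simp only [Ne, Finset.lcm_eq_zero_iff, Set.mem_image]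
      rintro ⟨i, hi, h0⟩
      exact hf i (Finset.mem_cons_of_mem hi) h0
    have h1 := Nat.factorization_lcm hfa hs0
    have h2 := Finsupp.ext_iff.mp h1 p
    simp only [Finsupp.sup_apply] at h2
    rw [lcm_eq_nat_lcm, h2, sup_le_iff]
    exact ⟨h a (Finset.mem_cons_self a s),
      ih (fun i hi => hf i (Finset.mem_cons_of_mem hi))
        (fun i hi => h i (Finset.mem_cons_of_mem hi))⟩

theorem farhi_identity_rewritten (n : ℕ) (hn : 0 < n) :
    n * (Finset.range n).lcm (n - 1).choose = (Finset.Icc 1 n).lcm id := by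
  have hne : ∀ k ∈ Finset.range n, (n - 1).choose k ≠ 0 := by
    intro k hk
    exact (Nat.choose_pos (by simp at hk; omega)).ne'
  have hL0 : (Finset.range n).lcm (n - 1).choose ≠ 0 := by
    simp only [Ne, Finset.lcm_eq_zero_iff, Set.mem_image]
    rintro ⟨k, hk, h0⟩
    exact hne k hk h0
  have hR0 : (Finset.Icc 1 n).lcm id ≠ 0 := by
    simp only [Ne, Finset.lcm_eq_zero_iff, Set.mem_image]
    rintro ⟨m, hm, h0⟩
    simp at hm h0; omega
  have hid : ∀ k, k < n → n * (n - 1).choose k = n.choose (k + 1) * (k + 1) := by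
    intro k hk
    have := Nat.add_one_mul_choose_eq (n - 1) k
    rwa [Nat.sub_add_cancel hn] at this
  apply Nat.dvd_antisymm
  · rw [← Nat.factorization_le_iff_dvd (mul_ne_zero hn.ne' hL0) hR0, Finsupp.le_def]
    intro p
    by_cases hp : p.Prime
    · rw [Nat.factorization_mul hn.ne' hL0, Finsupp.add_apply]
      have hterm : ∀ k ∈ Finset.range n,
          n.factorization p + ((n - 1).choose k).factorization p ≤ Nat.log p n := by
        intro k hk
        rw [Finset.mem_range] at hk
        have h1 : (n * (n - 1).choose k).factorization p
            = ((k + 1) * n.choose (k + 1)).factorization p := by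
          rw [hid k hk, mul_comm]
        rw [Nat.factorization_mul hn.ne' (hne k (Finset.mem_range.mpr hk)),
          Nat.factorization_mul (Nat.succ_ne_zero k)
            (Nat.choose_pos (by omega : k + 1 ≤ n)).ne'] at h1
        have h2 := key hp (Nat.succ_le_succ (Nat.zero_le k)) (by omega : k + 1 ≤ n)
        simp only [Finsupp.add_apply, Nat.succ_eq_add_one] at h1 h2
        omega
      have hnfact : n.factorization p ≤ Nat.log p n := by
        have := hterm 0 (Finset.mem_range.mpr hn)
        omega
      have hLfact : ((Finset.range n).lcm (n - 1).choose).factorization p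
          ≤ Nat.log p n - n.factorization p := by
        apply lcm_factorization_le hne
        intro k hk
        have := hterm k hk
        omega
      have hRfact : Nat.log p n ≤ ((Finset.Icc 1 n).lcm id).factorization p := by
        have hdvd : p ^ Nat.log p n ∣ (Finset.Icc 1 n).lcm id := by
          have hmem : p ^ Nat.log p n ∈ Finset.Icc 1 n := by
            rw [Finset.mem_Icc]
            exact ⟨pow_pos hp.pos _, Nat.pow_log_le_self p hn.ne'⟩
          exact Finset.dvd_lcm hmem
        exact (Nat.Prime.pow_dvd_iff_le_factorization hp hR0).mp hdvd
      omega
    · simp [Nat.factorization_eq_zero_of_not_prime _ hp]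
  · apply Finset.lcm_dvd
    intro m hm
    rw [Finset.mem_Icc] at hm
    have hkm : m - 1 < n := by omega
    have h1 : m ∣ n * (n - 1).choose (m - 1) := by
      rw [hid (m - 1) hkm, Nat.sub_add_cancel hm.1]
      exact dvd_mul_left m (n.choose m)
    exact h1.trans (mul_dvd_mul_left n (Finset.dvd_lcm (Finset.mem_range.mpr hkm)))
end

section
/- For any positive integer n, n times the least common multiple of the binomial coefficients C(n-1,0), C(n-1,1), ..., C(n-1, ⌊(n-1)/2⌋) equals the least common multiple of 1, 2, ..., n; that is, n·lcm{C(n-1,k) : 0 ≤ k ≤ ⌊(n-1)/2⌋} = lcm(1, 2, ..., n). -/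
open Nat Finset

lemma factorization_choose_le_log_sub {p n j : ℕ} (hp : p.Prime) (hj : 1 ≤ j) (hjn : j ≤ n) :
    (n.choose j).factorization p ≤ Nat.log p n - j.factorization p := by
  have hj0 : j ≠ 0 := by omega
  have hcpos : 0 < n.choose j := Nat.choose_pos hjn
  set a := j.factorization p with ha
  have hpa : p ^ a ∣ j := Nat.ordProj_dvd j p
  have haln : a ≤ Nat.log p n := by
    rw [Nat.le_log_iff_pow_le hp.one_lt (by omega)]
    exact le_trans (Nat.le_of_dvd (by omega) hpa) hjn
  rw [Nat.factorization_def _ hp, @padicValNat_def _ ⟨hp⟩ _ hcpos.ne']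
  rw [← Nat.cast_le (α := ℕ∞), ← FiniteMultiplicity.emultiplicity_eq_multiplicity
    (Nat.finiteMultiplicity_iff.2 ⟨hp.ne_one, hcpos⟩)]
  rw [hp.emultiplicity_choose hjn (lt_add_one _)]
  rw [Nat.cast_le]
  calc #{i ∈ Ico 1 (Nat.log p n + 1) | p ^ i ≤ j % p ^ i + (n - j) % p ^ i}
      ≤ #(Ico (a + 1) (Nat.log p n + 1)) := by
        apply Finset.card_le_card
        intro i hi
        simp only [Finset.mem_filter, Finset.mem_Ico] at hi ⊢
        refine ⟨?_, hi.1.2⟩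
        by_contra hia
        push_neg at hia
        have hpij : p ^ i ∣ j := dvd_trans (pow_dvd_pow p (by omega)) hpa
        have h1 : j % p ^ i = 0 := Nat.eq_zero_of_dvd_of_lt hpij |> fun _ => Nat.mod_eq_zero_of_dvd hpij
        have h2 : (n - j) % p ^ i < p ^ i := Nat.mod_lt _ (pow_pos hp.pos i)
        omega
    _ = Nat.log p n - a := by rw [Nat.card_Ico]; omega

lemma lcm_mul_left_range (c : ℕ) (f : ℕ → ℕ) (m : ℕ) :
    (Finset.range (m + 1)).lcm (fun k => c * f k) = c * (Finset.range (m + 1)).lcm f := by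
  induction m with
  | zero => simp [Nat.lcm]
  | succ m ih =>
      rw [Finset.range_add_one, Finset.lcm_insert, Finset.lcm_insert, ih]
      show Nat.lcm _ _ = c * Nat.lcm _ _
      rw [Nat.lcm_mul_left]

theorem farhi_identity_half (n : ℕ) (hn : 0 < n) :
    n * (Finset.range ((n - 1) / 2 + 1)).lcm (n - 1).choose
      = (Finset.Icc 1 n).lcm id := by
  have hM0 : (Finset.Icc 1 n).lcm id ≠ 0 := by
    simp only [Ne, Finset.lcm_eq_zero_iff]
    simp only [Set.mem_image, Finset.mem_coe, Finset.mem_Icc, id_eq]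
    rintro ⟨x, ⟨h1, h2⟩, rfl⟩; omega
  apply Nat.dvd_antisymm
  · -- n * L ∣ M
    rw [← lcm_mul_left_range]
    apply Finset.lcm_dvd
    intro k hk
    rw [Finset.mem_range] at hk
    have hkn : k + 1 ≤ n := by omega
    have hid : n * (n - 1).choose k = n.choose (k + 1) * (k + 1) := by
      have := Nat.add_one_mul_choose_eq (n - 1) k
      rwa [Nat.sub_add_cancel hn] at this
    rw [hid]
    rw [← Nat.factorization_le_iff_dvd (Nat.mul_ne_zero (Nat.choose_pos hkn).ne' (by omega)) hM0]
    intro p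
    by_cases hp : p.Prime
    · have h1 : (n.choose (k + 1) * (k + 1)).factorization p ≤ Nat.log p n := by
        rw [Nat.factorization_mul (Nat.choose_pos hkn).ne' (by omega)]
        have := factorization_choose_le_log_sub (n := n) (j := k + 1) hp (by omega) hkn
        have ha : (k + 1).factorization p ≤ Nat.log p n := by
          have hpa : p ^ (k + 1).factorization p ∣ k + 1 := Nat.ordProj_dvd _ p
          rw [Nat.le_log_iff_pow_le hp.one_lt (by omega)]
          exact le_trans (Nat.le_of_dvd (by omega) hpa) hkn
        simp only [Finsupp.coe_add, Pi.add_apply]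
        omega
      have h2 : Nat.log p n ≤ ((Finset.Icc 1 n).lcm id).factorization p := by
        rw [← Nat.Prime.pow_dvd_iff_le_factorization hp hM0]
        have hmem : p ^ Nat.log p n ∈ Finset.Icc 1 n := by
          rw [Finset.mem_Icc]
          exact ⟨Nat.one_le_pow _ _ hp.pos, Nat.pow_log_le_self p hn.ne'⟩
        exact Finset.dvd_lcm hmem
      exact le_trans h1 h2
    · simp [Nat.factorization_eq_zero_of_not_prime _ hp]
  · -- M ∣ n * L
    apply Finset.lcm_dvd
    intro m hm
    rw [Finset.mem_Icc] at hm
    obtain ⟨hm1, hmn⟩ := hm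
    set k : ℕ := if m - 1 ≤ (n - 1) / 2 then m - 1 else n - m with hkdef
    have hkmem : k ∈ Finset.range ((n - 1) / 2 + 1) := by
      rw [Finset.mem_range, hkdef]
      split <;> omega
    have hchoose : (n - 1).choose (m - 1) = (n - 1).choose k := by
      rw [hkdef]
      split
      · rfl
      · rw [show n - m = n - 1 - (m - 1) by omega, Nat.choose_symm (by omega)]
    have hid : n * (n - 1).choose (m - 1) = n.choose m * m := by
      have := Nat.add_one_mul_choose_eq (n - 1) (m - 1)
      rwa [Nat.sub_add_cancel hn, Nat.sub_add_cancel hm1] at this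
    have hdvd1 : (m : ℕ) ∣ n * (n - 1).choose k := by
      rw [← hchoose, hid]; exact dvd_mul_left m _
    exact hdvd1.trans (mul_dvd_mul_left n (Finset.dvd_lcm hkmem))
end
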